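/- Let G be a group acting on a set X, and for each x ∈ X say a finite set A of 'atoms' supports x if every group element fixing A pointwise (under a fixed action on atoms) also fixes x. In the category of nominal sets over the Rado graph automorphism group (Rado-nominal sets): if finite sets A and B both support an element x, then A ∩ B supports x. -/
import Mathlib

/-- A graph has the extension property if for all disjoint finite vertex sets `A`, `B`
there is a vertex outside `A ∪ B` adjacent to everything in `A` and nothing in `B`. -/
def HasExtensionProperty {V : Type*} (G : SimpleGraph V) : Prop :=
  ∀ A B : Finset V, Disjoint A B →
    ∃ v, v ∉ A ∧ v ∉ B ∧ (∀ a ∈ A, G.Adj v a) ∧ ∀ b ∈ B, ¬ G.Adj v b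

/-- `A` supports `x` under the action `act` of the automorphism group of `G`:
every automorphism fixing `A` pointwise fixes `x`. -/
def SupportsElt {V X : Type} (G : SimpleGraph V) (act : (G ≃g G) → X → X)
    (A : Finset V) (x : X) : Prop :=
  ∀ σ : G ≃g G, (∀ a ∈ A, σ a = a) → act σ x = x

open Function

section Aux

variable {V : Type} [DecidableEq V] (G : SimpleGraph V)

/-- A fresh vertex realizing a prescribed adjacency pattern on a finite set. -/
lemma fresh_vertex (hG : HasExtensionProperty G) (S : Finset V) (P : V → Prop) :
    ∃ v, v ∉ S ∧ ∀ u ∈ S, (G.Adj v u ↔ P u) := by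
  classical
  obtain ⟨v, h1, h2, h3, h4⟩ := hG (S.filter P) (S.filter fun u => ¬ P u)
    (by
      rw [Finset.disjoint_left]
      intro a ha hb
      exact (Finset.mem_filter.1 hb).2 (Finset.mem_filter.1 ha).2)
  refine ⟨v, ?_, ?_⟩
  · intro hv
    by_cases hP : P v
    · exact h1 (Finset.mem_filter.2 ⟨hv, hP⟩)
    · exact h2 (Finset.mem_filter.2 ⟨hv, hP⟩)
  · intro u hu
    by_cases hP : P u
    · exact ⟨fun _ => hP, fun _ => h3 u (Finset.mem_filter.2 ⟨hu, hP⟩)⟩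
    · exact ⟨fun h => absurd h (h4 u (Finset.mem_filter.2 ⟨hu, hP⟩)), fun hp => absurd hp hP⟩

/-- A fresh family of vertices realizing prescribed adjacencies to a finite set `S`
(via `q`) and among themselves (via `r`). -/
lemma fresh_family (hG : HasExtensionProperty G) (S : Finset V) (T : Finset V)
    (q : V → V → Prop) (r : V → V → Prop) (hr : ∀ t t', r t t' ↔ r t' t) :
    ∃ d : V → V, (∀ t ∈ T, d t ∉ S) ∧
      (∀ t ∈ T, ∀ t' ∈ T, d t = d t' → t = t') ∧
      (∀ t ∈ T, ∀ v ∈ S, (G.Adj (d t) v ↔ q t v)) ∧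
      (∀ t ∈ T, ∀ t' ∈ T, t ≠ t' → (G.Adj (d t) (d t') ↔ r t t')) := by
  classical
  induction T using Finset.cons_induction with
  | empty => exact ⟨id, by simp, by simp, by simp, by simp⟩
  | cons t₀ T ht ih =>
    obtain ⟨d, hd1, hd2, hd3, hd4⟩ := ih
    obtain ⟨v₀, hv1, hv2⟩ := fresh_vertex G hG (S ∪ T.image d)
      (fun v => (v ∈ S ∧ q t₀ v) ∨ ∃ t ∈ T, d t = v ∧ r t₀ t)
    have hv0S : v₀ ∉ S := fun h => hv1 (Finset.mem_union_left _ h)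
    have hv0T : ∀ t ∈ T, v₀ ≠ d t := fun t htT h =>
      hv1 (Finset.mem_union_right _ (h ▸ Finset.mem_image_of_mem d htT))
    have memT : ∀ t, t ∈ Finset.cons t₀ T ht → t ≠ t₀ → t ∈ T :=
      fun t hm h => (Finset.mem_cons.1 hm).resolve_left h
    have key : ∀ t ∈ T, (G.Adj v₀ (d t) ↔ r t₀ t) := by
      intro t htT
      rw [hv2 (d t) (Finset.mem_union_right _ (Finset.mem_image_of_mem d htT))]
      constructor
      · rintro (⟨hS, _⟩ | ⟨t'', ht'', heq, hrr⟩)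
        · exact absurd hS (hd1 t htT)
        · rw [hd2 t'' ht'' t htT heq] at hrr; exact hrr
      · intro h; exact Or.inr ⟨t, htT, rfl, h⟩
    refine ⟨Function.update d t₀ v₀, ?_, ?_, ?_, ?_⟩
    · intro t htm
      by_cases h1 : t = t₀
      · rw [h1, Function.update_self]; exact hv0S
      · rw [Function.update_of_ne h1]; exact hd1 t (memT t htm h1)
    · intro t htm t' htm' h
      by_cases h1 : t = t₀ <;> by_cases h2 : t' = t₀
      · rw [h1, h2]
      · rw [h1, Function.update_self, Function.update_of_ne h2] at h
        exact absurd h (hv0T t' (memT t' htm' h2))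
      · rw [h2, Function.update_self, Function.update_of_ne h1] at h
        exact absurd h.symm (hv0T t (memT t htm h1))
      · rw [Function.update_of_ne h1, Function.update_of_ne h2] at h
        exact hd2 t (memT t htm h1) t' (memT t' htm' h2) h
    · intro t htm v hv
      by_cases h1 : t = t₀
      · rw [h1, Function.update_self]
        rw [hv2 v (Finset.mem_union_left _ hv)]
        constructor
        · rintro (⟨_, h⟩ | ⟨t', ht', rfl, _⟩)
          · exact h
          · exact absurd hv (hd1 t' ht')
        · intro h; exact Or.inl ⟨hv, h⟩
      · rw [Function.update_of_ne h1]; exact hd3 t (memT t htm h1) v hv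
    · intro t htm t' htm' hnett
      by_cases h1 : t = t₀ <;> by_cases h2 : t' = t₀
      · exact absurd (h1.trans h2.symm) hnett
      · rw [h1, Function.update_self, Function.update_of_ne h2]
        rw [key t' (memT t' htm' h2)]
      · rw [h2, Function.update_self, Function.update_of_ne h1]
        rw [G.adj_comm, key t (memT t htm h1)]
        exact hr t₀ t
      · rw [Function.update_of_ne h1, Function.update_of_ne h2]
        exact hd4 t (memT t htm h1) t' (memT t' htm' h2) hnett

/-- Finite partial isomorphisms of `G`. -/
structure PartIso (G : SimpleGraph V) where
  s : Finset V
  f : V → V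
  inj : ∀ u ∈ s, ∀ v ∈ s, f u = f v → u = v
  adj : ∀ u ∈ s, ∀ v ∈ s, (G.Adj (f u) (f v) ↔ G.Adj u v)

lemma step_fwd (hG : HasExtensionProperty G) (p : PartIso G) (w : V) :
    ∃ q : PartIso G, p.s ⊆ q.s ∧ (∀ v ∈ p.s, q.f v = p.f v) ∧ w ∈ q.s := by
  classical
  by_cases hw : w ∈ p.s
  · exact ⟨p, subset_rfl, fun _ _ => rfl, hw⟩
  obtain ⟨v, hv1, hv2⟩ := fresh_vertex G hG (p.s.image p.f)
    (fun y => ∃ u ∈ p.s, p.f u = y ∧ G.Adj w u)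
  have hagree : ∀ u ∈ p.s, Function.update p.f w v u = p.f u := fun u hu =>
    Function.update_of_ne (fun h => hw (show w ∈ p.s by rwa [h] at hu)) _ _
  have memS : ∀ a, a ∈ insert w p.s → a ≠ w → a ∈ p.s :=
    fun a hm h => (Finset.mem_insert.1 hm).resolve_left h
  refine ⟨⟨insert w p.s, Function.update p.f w v, ?_, ?_⟩,
    Finset.subset_insert _ _, hagree, Finset.mem_insert_self _ _⟩
  · intro a ha b hb h
    by_cases h1 : a = w <;> by_cases h2 : b = w
    · rw [h1, h2]
    · have hb' := memS b hb h2
      rw [h1, Function.update_self, hagree b hb'] at h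
      exact absurd (by rw [h]; exact Finset.mem_image_of_mem p.f hb') hv1
    · have ha' := memS a ha h1
      rw [h2, Function.update_self, hagree a ha'] at h
      exact absurd (by rw [← h]; exact Finset.mem_image_of_mem p.f ha') hv1
    · have ha' := memS a ha h1
      have hb' := memS b hb h2
      rw [hagree a ha', hagree b hb'] at h
      exact p.inj a ha' b hb' h
  · intro a ha b hb
    by_cases h1 : a = w <;> by_cases h2 : b = w
    · rw [h1, h2]; exact iff_of_false (G.irrefl) (G.irrefl)
    · have hb' := memS b hb h2
      rw [h1, Function.update_self, hagree b hb']
      rw [hv2 (p.f b) (Finset.mem_image_of_mem p.f hb')]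
      constructor
      · rintro ⟨u, hu, heq, hadj⟩
        rwa [p.inj u hu b hb' heq] at hadj
      · intro h; exact ⟨b, hb', rfl, h⟩
    · have ha' := memS a ha h1
      rw [h2, Function.update_self, hagree a ha', G.adj_comm (p.f a) v, G.adj_comm a w]
      rw [hv2 (p.f a) (Finset.mem_image_of_mem p.f ha')]
      constructor
      · rintro ⟨u, hu, heq, hadj⟩
        rwa [p.inj u hu a ha' heq] at hadj
      · intro h; exact ⟨a, ha', rfl, h⟩
    · have ha' := memS a ha h1
      have hb' := memS b hb h2
      rw [hagree a ha', hagree b hb']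
      exact p.adj a ha' b hb'

lemma step_bwd (hG : HasExtensionProperty G) (p : PartIso G) (w : V) :
    ∃ q : PartIso G, p.s ⊆ q.s ∧ (∀ v ∈ p.s, q.f v = p.f v) ∧ ∃ u ∈ q.s, q.f u = w := by
  classical
  by_cases hw : ∃ u ∈ p.s, p.f u = w
  · exact ⟨p, subset_rfl, fun _ _ => rfl, hw⟩
  push_neg at hw
  obtain ⟨u₀, hu1, hu2⟩ := fresh_vertex G hG p.s (fun v => G.Adj w (p.f v))
  have hagree : ∀ u ∈ p.s, Function.update p.f u₀ w u = p.f u := fun u hu =>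
    Function.update_of_ne (fun h => hu1 (show u₀ ∈ p.s by rwa [h] at hu)) _ _
  have memS : ∀ a, a ∈ insert u₀ p.s → a ≠ u₀ → a ∈ p.s :=
    fun a hm h => (Finset.mem_insert.1 hm).resolve_left h
  refine ⟨⟨insert u₀ p.s, Function.update p.f u₀ w, ?_, ?_⟩,
    Finset.subset_insert _ _, hagree, u₀, Finset.mem_insert_self _ _, Function.update_self _ _ _⟩
  · intro a ha b hb h
    by_cases h1 : a = u₀ <;> by_cases h2 : b = u₀
    · rw [h1, h2]
    · have hb' := memS b hb h2
      rw [h1, Function.update_self, hagree b hb'] at h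
      exact absurd h.symm (hw b hb')
    · have ha' := memS a ha h1
      rw [h2, Function.update_self, hagree a ha'] at h
      exact absurd h (hw a ha')
    · have ha' := memS a ha h1
      have hb' := memS b hb h2
      rw [hagree a ha', hagree b hb'] at h
      exact p.inj a ha' b hb' h
  · intro a ha b hb
    by_cases h1 : a = u₀ <;> by_cases h2 : b = u₀
    · rw [h1, h2]; exact iff_of_false (G.irrefl) (G.irrefl)
    · have hb' := memS b hb h2
      rw [h1, Function.update_self, hagree b hb']
      exact (hu2 b hb').symm
    · have ha' := memS a ha h1
      rw [h2, Function.update_self, hagree a ha', G.adj_comm (p.f a) w, G.adj_comm a u₀]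
      exact (hu2 a ha').symm
    · have ha' := memS a ha h1
      have hb' := memS b hb h2
      rw [hagree a ha', hagree b hb']
      exact p.adj a ha' b hb'

lemma step_both (hG : HasExtensionProperty G) (p : PartIso G) (w : V) :
    ∃ q : PartIso G, p.s ⊆ q.s ∧ (∀ v ∈ p.s, q.f v = p.f v) ∧ w ∈ q.s ∧
      ∃ u ∈ q.s, q.f u = w := by
  obtain ⟨q1, h1, h2, h3⟩ := step_fwd G hG p w
  obtain ⟨q2, g1, g2, g3⟩ := step_bwd G hG q1 w
  exact ⟨q2, h1.trans g1, fun v hv => (g2 v (h1 hv)).trans (h2 v hv), g1 h3, g3⟩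

noncomputable def chain (hG : HasExtensionProperty G) (p0 : PartIso G) (κ : ℕ → V) :
    ℕ → PartIso G :=
  fun n => Nat.rec p0 (fun n p => (step_both G hG p (κ n)).choose) n

lemma chain_mono (hG : HasExtensionProperty G) (p0 : PartIso G) (κ : ℕ → V)
    (m n : ℕ) (h : m ≤ n) :
    (chain G hG p0 κ m).s ⊆ (chain G hG p0 κ n).s ∧
      ∀ v ∈ (chain G hG p0 κ m).s,
        (chain G hG p0 κ n).f v = (chain G hG p0 κ m).f v := by
  induction n with
  | zero =>
    obtain rfl := Nat.le_zero.mp h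
    exact ⟨subset_rfl, fun _ _ => rfl⟩
  | succ n ih =>
    by_cases hmn : m = n + 1
    · subst hmn; exact ⟨subset_rfl, fun _ _ => rfl⟩
    · have h' : m ≤ n := Nat.lt_succ_iff.mp (Nat.lt_of_le_of_ne h hmn)
      obtain ⟨hs, hf⟩ := ih h'
      have spec := (step_both G hG (chain G hG p0 κ n) (κ n)).choose_spec
      have hchain : chain G hG p0 κ (n + 1) =
          (step_both G hG (chain G hG p0 κ n) (κ n)).choose := rfl
      rw [hchain]
      exact ⟨hs.trans spec.1, fun v hv => (spec.2.1 v (hs hv)).trans (hf v hv)⟩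

/-- Back-and-forth: any finite partial isomorphism of a countable graph with the
extension property extends to a full automorphism. -/
lemma extend_partial [Countable V] [Infinite V] (hG : HasExtensionProperty G)
    (s : Finset V) (k : V → V)
    (hinj : ∀ u ∈ s, ∀ v ∈ s, k u = k v → u = v)
    (hadj : ∀ u ∈ s, ∀ v ∈ s, (G.Adj (k u) (k v) ↔ G.Adj u v)) :
    ∃ σ : G ≃g G, ∀ v ∈ s, σ v = k v := by
  classical
  obtain ⟨κ, hκ⟩ := exists_surjective_nat V
  set p0 : PartIso G := ⟨s, k, hinj, hadj⟩ with hp0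
  set g := chain G hG p0 κ with hg
  have hchain : ∀ n, g (n + 1) = (step_both G hG (g n) (κ n)).choose := fun n => rfl
  have hdom : ∀ v : V, ∃ n, v ∈ (g n).s := by
    intro v
    obtain ⟨n, rfl⟩ := hκ v
    have spec := (step_both G hG (g n) (κ n)).choose_spec
    exact ⟨n + 1, by rw [hchain n]; exact spec.2.2.1⟩
  have hrange : ∀ w : V, ∃ n, ∃ u ∈ (g n).s, (g n).f u = w := by
    intro w
    obtain ⟨n, rfl⟩ := hκ w
    have spec := (step_both G hG (g n) (κ n)).choose_spec
    exact ⟨n + 1, by rw [hchain n]; exact spec.2.2.2⟩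
  choose N hN using hdom
  have coh : ∀ (m n : ℕ), ∀ v ∈ (g m).s, m ≤ n → (g n).f v = (g m).f v :=
    fun m n v hv h => (chain_mono G hG p0 κ m n h).2 v hv
  have cohs : ∀ (m n : ℕ), m ≤ n → (g m).s ⊆ (g n).s :=
    fun m n h => (chain_mono G hG p0 κ m n h).1
  set F : V → V := fun v => (g (N v)).f v with hF
  have hFn : ∀ (n : ℕ), ∀ v ∈ (g n).s, F v = (g n).f v := by
    intro n v hv
    rcases le_total (N v) n with h | h
    · exact (coh (N v) n v (hN v) h).symm
    · exact coh n (N v) v hv h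
  have hFinj : Function.Injective F := by
    intro u v h
    set M := max (N u) (N v) with hM
    have hu : u ∈ (g M).s := cohs (N u) M (le_max_left _ _) (hN u)
    have hv : v ∈ (g M).s := cohs (N v) M (le_max_right _ _) (hN v)
    rw [hFn M u hu, hFn M v hv] at h
    exact (g M).inj u hu v hv h
  have hFsurj : Function.Surjective F := by
    intro w
    obtain ⟨n, u, hu, hfu⟩ := hrange w
    exact ⟨u, (hFn n u hu).trans hfu⟩
  have hFadj : ∀ u v, (G.Adj (F u) (F v) ↔ G.Adj u v) := by
    intro u v
    set M := max (N u) (N v) with hM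
    have hu : u ∈ (g M).s := cohs (N u) M (le_max_left _ _) (hN u)
    have hv : v ∈ (g M).s := cohs (N v) M (le_max_right _ _) (hN v)
    rw [hFn M u hu, hFn M v hv]
    exact (g M).adj u hu v hv
  refine ⟨⟨Equiv.ofBijective F ⟨hFinj, hFsurj⟩, ?_⟩, ?_⟩
  · intro a b; exact hFadj a b
  · intro v hv
    have h0 : v ∈ (g 0).s := hv
    exact hFn 0 v h0

/-- Indexed-pair form of the extension theorem. -/
lemma extend_pairs [Countable V] [Infinite V] (hG : HasExtensionProperty G)
    (I : Finset V) (f k : V → V)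
    (hf : ∀ u ∈ I, ∀ v ∈ I, f u = f v → u = v)
    (hk : ∀ u ∈ I, ∀ v ∈ I, k u = k v → u = v)
    (hadj : ∀ u ∈ I, ∀ v ∈ I, (G.Adj (k u) (k v) ↔ G.Adj (f u) (f v))) :
    ∃ σ : G ≃g G, ∀ v ∈ I, σ (f v) = k v := by
  classical
  have hne : Nonempty V := inferInstance
  have hIJ : Set.InjOn f ↑I := fun a ha b hb h => hf a ha b hb h
  set ι : V → V := fun w => Function.invFunOn f ↑I w with hι
  have hinv : ∀ v ∈ I, ι (f v) = v := fun v hv => hIJ.leftInvOn_invFunOn hv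
  have hinj' : ∀ u ∈ I.image f, ∀ v ∈ I.image f, k (ι u) = k (ι v) → u = v := by
    intro u hu v hv h
    obtain ⟨a, ha, rfl⟩ := Finset.mem_image.1 hu
    obtain ⟨b, hb, rfl⟩ := Finset.mem_image.1 hv
    rw [hinv a ha, hinv b hb] at h
    exact congrArg f (hk a ha b hb h)
  have hadj' : ∀ u ∈ I.image f, ∀ v ∈ I.image f,
      (G.Adj (k (ι u)) (k (ι v)) ↔ G.Adj u v) := by
    intro u hu v hv
    obtain ⟨a, ha, rfl⟩ := Finset.mem_image.1 hu
    obtain ⟨b, hb, rfl⟩ := Finset.mem_image.1 hv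
    rw [hinv a ha, hinv b hb]
    exact hadj a ha b hb
  obtain ⟨σ, hσ⟩ := extend_partial G hG (I.image f) (fun w => k (ι w)) hinj' hadj'
  exact ⟨σ, fun v hv => by
    have := hσ (f v) (Finset.mem_image_of_mem f hv)
    rwa [hinv v hv] at this⟩

end Aux

/-- In Rado-nominal sets (actions of the automorphism group of a countable graph with
the extension property, i.e. the Rado graph), if finite sets `A` and `B` both support
an element `x`, then so does `A ∩ B`. -/
theorem stmt9 {V : Type} [Countable V] [Infinite V] [DecidableEq V]
    (G : SimpleGraph V) (hG : HasExtensionProperty G)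
    {X : Type} (act : (G ≃g G) → X → X)
    (h_id : ∀ x, act (RelIso.refl G.Adj) x = x)
    (h_comp : ∀ (σ τ : G ≃g G) (x : X), act (σ.trans τ) x = act τ (act σ x))
    (A B : Finset V) (x : X)
    (hA : SupportsElt G act A x) (hB : SupportsElt G act B x) :
    SupportsElt G act (A ∩ B) x := by
  classical
  intro σ hσ
  have hσC : ∀ c, c ∈ A → c ∈ B → σ c = c := fun c h1 h2 => hσ c (Finset.mem_inter.2 ⟨h1, h2⟩)
  -- the basic sets
  set S0 : Finset V := (A ∪ B) ∪ (A ∪ B).image σ with hS0def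
  have hS0mem : ∀ v ∈ A ∪ B, v ∈ S0 := fun v hv => Finset.mem_union_left _ hv
  have hS0memσ : ∀ v ∈ A ∪ B, (σ v : V) ∈ S0 := fun v hv =>
    Finset.mem_union_right _ (Finset.mem_image_of_mem _ hv)
  have hAB : ∀ v ∈ A, v ∈ A ∪ B := fun v hv => Finset.mem_union_left _ hv
  have hBA : ∀ v ∈ B, v ∈ A ∪ B := fun v hv => Finset.mem_union_right _ hv
  -- fresh copy D of B \ A
  obtain ⟨d, hd1, hd2, hd3, hd4⟩ := fresh_family G hG S0 (B \ A)
    (fun b v => G.Adj b v) (fun b b' => G.Adj b b') (fun t t' => G.adj_comm t t')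
  set S1 : Finset V := S0 ∪ (B \ A).image d with hS1def
  -- fresh copy E of A \ B
  obtain ⟨e, he1, he2, he3, he4⟩ := fresh_family G hG S1 (A \ B)
    (fun a v => if v ∈ (B \ A).image d then G.Adj a v else G.Adj (σ a) v)
    (fun a a' => G.Adj a a') (fun t t' => G.adj_comm t t')
  -- derived adjacency facts
  have heV : ∀ a ∈ A \ B, ∀ v ∈ S0, (G.Adj (e a) v ↔ G.Adj (σ a) v) := by
    intro a ha v hv
    have h := he3 a ha v (Finset.mem_union_left _ hv)
    rwa [if_neg (fun hmem => by
      obtain ⟨b, hb, hdb⟩ := Finset.mem_image.1 hmem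
      exact hd1 b hb (hdb ▸ hv))] at h
  have heD : ∀ a ∈ A \ B, ∀ b ∈ B \ A, (G.Adj (e a) (d b) ↔ G.Adj a b) := by
    intro a ha b hb
    have h1 := he3 a ha (d b) (Finset.mem_union_right _ (Finset.mem_image_of_mem d hb))
    rw [if_pos (Finset.mem_image_of_mem d hb)] at h1
    rw [h1, G.adj_comm a (d b), hd3 b hb a (hS0mem a (hAB a (Finset.mem_sdiff.1 ha).1))]
    exact G.adj_comm b a
  -- the four partial maps
  set g1 : V → V := fun v => if v ∈ A then v else d v with hg1def
  set g2 : V → V := fun v => if v ∈ A \ B then e v else g1 v with hg2def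
  set g3 : V → V := fun v => if v ∈ B \ A then σ v else g2 v with hg3def
  set g4 : V → V := fun v => if v ∈ A \ B then σ v else g3 v with hg4def
  -- evaluation lemmas
  have hg1A : ∀ v ∈ A, g1 v = v := fun v hv => by rw [hg1def]; exact if_pos hv
  have hg1B : ∀ v ∈ B \ A, g1 v = d v := fun v hv => by
    rw [hg1def]; exact if_neg (Finset.mem_sdiff.1 hv).2
  have hg2AB : ∀ v ∈ A \ B, g2 v = e v := fun v hv => by rw [hg2def]; exact if_pos hv
  have hg2nAB : ∀ v, v ∉ A \ B → g2 v = g1 v := fun v hv => by rw [hg2def]; exact if_neg hv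
  have hg2C : ∀ v, v ∈ A → v ∈ B → g2 v = v := fun v h1 h2 => by
    rw [hg2nAB v (fun h => (Finset.mem_sdiff.1 h).2 h2)]; exact hg1A v h1
  have hg2B : ∀ v ∈ B \ A, g2 v = d v := fun v hv => by
    rw [hg2nAB v (fun h => (Finset.mem_sdiff.1 hv).2 (Finset.mem_sdiff.1 h).1)]
    exact hg1B v hv
  have hg3BA : ∀ v ∈ B \ A, g3 v = σ v := fun v hv => by rw [hg3def]; exact if_pos hv
  have hg3nBA : ∀ v, v ∉ B \ A → g3 v = g2 v := fun v hv => by rw [hg3def]; exact if_neg hv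
  have hg3AB : ∀ v ∈ A \ B, g3 v = e v := fun v hv => by
    rw [hg3nBA v (fun h => (Finset.mem_sdiff.1 h).2 (Finset.mem_sdiff.1 hv).1)]
    exact hg2AB v hv
  have hg3C : ∀ v, v ∈ A → v ∈ B → g3 v = v := fun v h1 h2 => by
    rw [hg3nBA v (fun h => (Finset.mem_sdiff.1 h).2 h1)]; exact hg2C v h1 h2
  have hg4AB : ∀ v ∈ A \ B, g4 v = σ v := fun v hv => by rw [hg4def]; exact if_pos hv
  have hg4nAB : ∀ v, v ∉ A \ B → g4 v = g3 v := fun v hv => by rw [hg4def]; exact if_neg hv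
  have hg4σ : ∀ v ∈ A ∪ B, g4 v = σ v := by
    intro v hv
    by_cases h1 : v ∈ A \ B
    · exact hg4AB v h1
    · rw [hg4nAB v h1]
      by_cases h2 : v ∈ B \ A
      · exact hg3BA v h2
      · have hvA : v ∈ A := by
          rcases Finset.mem_union.1 hv with h | h
          · exact h
          · by_contra hA; exact h2 (Finset.mem_sdiff.2 ⟨h, hA⟩)
        have hvB : v ∈ B := by
          by_contra hB; exact h1 (Finset.mem_sdiff.2 ⟨hvA, hB⟩)
        rw [hg3C v hvA hvB, hσC v hvA hvB]
  -- freshness-derived disequalities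
  have hdS0 : ∀ b ∈ B \ A, ∀ v ∈ S0, d b ≠ v := fun b hb v hv h => hd1 b hb (h ▸ hv)
  have heS1 : ∀ a ∈ A \ B, ∀ v ∈ S1, e a ≠ v := fun a ha v hv h => he1 a ha (h ▸ hv)
  have heS0 : ∀ a ∈ A \ B, ∀ v ∈ S0, e a ≠ v := fun a ha v hv =>
    heS1 a ha v (Finset.mem_union_left _ hv)
  have heDne : ∀ a ∈ A \ B, ∀ b ∈ B \ A, e a ≠ d b := fun a ha b hb =>
    heS1 a ha (d b) (Finset.mem_union_right _ (Finset.mem_image_of_mem d hb))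
  -- adjacency preservation of g1..g4 relative to the original tuple
  have P1 : ∀ u ∈ A ∪ B, ∀ v ∈ A ∪ B, (G.Adj (g1 u) (g1 v) ↔ G.Adj u v) := by
    have aux : ∀ u ∈ A, ∀ v ∈ A ∪ B, v ∉ A → (G.Adj (g1 u) (g1 v) ↔ G.Adj u v) := by
      intro u hu v hv hvA
      have hvB : v ∈ B \ A := Finset.mem_sdiff.2 ⟨(Finset.mem_union.1 hv).resolve_left hvA, hvA⟩
      rw [hg1A u hu, hg1B v hvB, G.adj_comm u (d v), hd3 v hvB u (hS0mem u (hAB u hu))]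
      exact G.adj_comm v u
    intro u hu v hv
    by_cases hua : u ∈ A <;> by_cases hva : v ∈ A
    · rw [hg1A u hua, hg1A v hva]
    · exact aux u hua v hv hva
    · rw [G.adj_comm (g1 u) (g1 v), G.adj_comm u v]; exact aux v hva u hu hua
    · have hub : u ∈ B \ A := Finset.mem_sdiff.2 ⟨(Finset.mem_union.1 hu).resolve_left hua, hua⟩
      have hvb : v ∈ B \ A := Finset.mem_sdiff.2 ⟨(Finset.mem_union.1 hv).resolve_left hva, hva⟩
      by_cases huv : u = v
      · rw [huv]; exact iff_of_false (G.irrefl) (G.irrefl)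
      · rw [hg1B u hub, hg1B v hvb]; exact hd4 u hub v hvb huv
  have P2 : ∀ u ∈ A ∪ B, ∀ v ∈ A ∪ B, (G.Adj (g2 u) (g2 v) ↔ G.Adj u v) := by
    have aux : ∀ u ∈ A \ B, ∀ v ∈ A ∪ B, v ∉ A \ B → (G.Adj (g2 u) (g2 v) ↔ G.Adj u v) := by
      intro u hu v hv hv2
      rw [hg2AB u hu]
      by_cases hvA : v ∈ A
      · have hvB : v ∈ B := by by_contra h; exact hv2 (Finset.mem_sdiff.2 ⟨hvA, h⟩)
        rw [hg2C v hvA hvB, heV u hu v (hS0mem v hv)]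
        conv_lhs => rw [← hσC v hvA hvB]
        exact σ.map_rel_iff
      · have hvb : v ∈ B \ A :=
          Finset.mem_sdiff.2 ⟨(Finset.mem_union.1 hv).resolve_left hvA, hvA⟩
        rw [hg2B v hvb]
        exact heD u hu v hvb
    intro u hu v hv
    by_cases hu2 : u ∈ A \ B <;> by_cases hv2 : v ∈ A \ B
    · by_cases huv : u = v
      · rw [huv]; exact iff_of_false (G.irrefl) (G.irrefl)
      · rw [hg2AB u hu2, hg2AB v hv2]; exact he4 u hu2 v hv2 huv
    · exact aux u hu2 v hv hv2
    · rw [G.adj_comm (g2 u) (g2 v), G.adj_comm u v]; exact aux v hv2 u hu hu2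
    · rw [hg2nAB u hu2, hg2nAB v hv2]; exact P1 u hu v hv
  have P3 : ∀ u ∈ A ∪ B, ∀ v ∈ A ∪ B, (G.Adj (g3 u) (g3 v) ↔ G.Adj u v) := by
    have aux : ∀ u ∈ B \ A, ∀ v ∈ A ∪ B, v ∉ B \ A → (G.Adj (g3 u) (g3 v) ↔ G.Adj u v) := by
      intro u hu v hv hv3
      rw [hg3BA u hu]
      have hvA : v ∈ A := by
        rcases Finset.mem_union.1 hv with h | h
        · exact h
        · by_contra hA; exact hv3 (Finset.mem_sdiff.2 ⟨h, hA⟩)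
      by_cases hvB : v ∈ B
      · rw [hg3C v hvA hvB]
        conv_lhs => rw [← hσC v hvA hvB]
        exact σ.map_rel_iff
      · have hv2 : v ∈ A \ B := Finset.mem_sdiff.2 ⟨hvA, hvB⟩
        rw [hg3AB v hv2, G.adj_comm (σ u) (e v),
          heV v hv2 (σ u) (hS0memσ u (hBA u (Finset.mem_sdiff.1 hu).1)),
          G.adj_comm (σ v) (σ u), σ.map_rel_iff]
    intro u hu v hv
    by_cases hu3 : u ∈ B \ A <;> by_cases hv3 : v ∈ B \ A
    · by_cases huv : u = v
      · rw [huv]; exact iff_of_false (G.irrefl) (G.irrefl)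
      · rw [hg3BA u hu3, hg3BA v hv3]; exact σ.map_rel_iff
    · exact aux u hu3 v hv hv3
    · rw [G.adj_comm (g3 u) (g3 v), G.adj_comm u v]; exact aux v hv3 u hu hu3
    · rw [hg3nBA u hu3, hg3nBA v hv3]; exact P2 u hu v hv
  have P4 : ∀ u ∈ A ∪ B, ∀ v ∈ A ∪ B, (G.Adj (g4 u) (g4 v) ↔ G.Adj u v) := by
    intro u hu v hv
    rw [hg4σ u hu, hg4σ v hv]; exact σ.map_rel_iff
  -- injectivity of g1..g4 on A ∪ B
  have I1 : ∀ u ∈ A ∪ B, ∀ v ∈ A ∪ B, g1 u = g1 v → u = v := by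
    intro u hu v hv h
    by_cases hua : u ∈ A <;> by_cases hva : v ∈ A
    · rwa [hg1A u hua, hg1A v hva] at h
    · have hvb : v ∈ B \ A := Finset.mem_sdiff.2 ⟨(Finset.mem_union.1 hv).resolve_left hva, hva⟩
      rw [hg1A u hua, hg1B v hvb] at h
      exact absurd h.symm (hdS0 v hvb u (hS0mem u (hAB u hua)))
    · have hub : u ∈ B \ A := Finset.mem_sdiff.2 ⟨(Finset.mem_union.1 hu).resolve_left hua, hua⟩
      rw [hg1B u hub, hg1A v hva] at h
      exact absurd h (hdS0 u hub v (hS0mem v (hAB v hva)))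
    · have hub : u ∈ B \ A := Finset.mem_sdiff.2 ⟨(Finset.mem_union.1 hu).resolve_left hua, hua⟩
      have hvb : v ∈ B \ A := Finset.mem_sdiff.2 ⟨(Finset.mem_union.1 hv).resolve_left hva, hva⟩
      rw [hg1B u hub, hg1B v hvb] at h
      exact hd2 u hub v hvb h
  have g1S1 : ∀ v ∈ A ∪ B, v ∉ A \ B → g1 v ∈ S1 := by
    intro v hv hv2
    by_cases hvA : v ∈ A
    · rw [hg1A v hvA]; exact Finset.mem_union_left _ (hS0mem v hv)
    · have hvb : v ∈ B \ A := Finset.mem_sdiff.2 ⟨(Finset.mem_union.1 hv).resolve_left hvA, hvA⟩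
      rw [hg1B v hvb]
      exact Finset.mem_union_right _ (Finset.mem_image_of_mem d hvb)
  have I2 : ∀ u ∈ A ∪ B, ∀ v ∈ A ∪ B, g2 u = g2 v → u = v := by
    intro u hu v hv h
    by_cases hu2 : u ∈ A \ B <;> by_cases hv2 : v ∈ A \ B
    · rw [hg2AB u hu2, hg2AB v hv2] at h; exact he2 u hu2 v hv2 h
    · rw [hg2AB u hu2, hg2nAB v hv2] at h
      exact absurd h (heS1 u hu2 (g1 v) (g1S1 v hv hv2))
    · rw [hg2nAB u hu2, hg2AB v hv2] at h
      exact absurd h.symm (heS1 v hv2 (g1 u) (g1S1 u hu hu2))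
    · rw [hg2nAB u hu2, hg2nAB v hv2] at h; exact I1 u hu v hv h
  have I3 : ∀ u ∈ A ∪ B, ∀ v ∈ A ∪ B, g3 u = g3 v → u = v := by
    have aux : ∀ u ∈ B \ A, ∀ v ∈ A ∪ B, v ∉ B \ A → g3 u = g3 v → u = v := by
      intro u hu v hv hv3 h
      rw [hg3BA u hu] at h
      have hvA : v ∈ A := by
        rcases Finset.mem_union.1 hv with h' | h'
        · exact h'
        · by_contra hA; exact hv3 (Finset.mem_sdiff.2 ⟨h', hA⟩)
      by_cases hvB : v ∈ B
      · rw [hg3C v hvA hvB] at h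
        have : σ u = σ v := by rw [h, hσC v hvA hvB]
        exact σ.injective this
      · have hv2 : v ∈ A \ B := Finset.mem_sdiff.2 ⟨hvA, hvB⟩
        rw [hg3AB v hv2] at h
        exact absurd h.symm (heS0 v hv2 (σ u) (hS0memσ u (hBA u (Finset.mem_sdiff.1 hu).1)))
    intro u hu v hv h
    by_cases hu3 : u ∈ B \ A <;> by_cases hv3 : v ∈ B \ A
    · rw [hg3BA u hu3, hg3BA v hv3] at h; exact σ.injective h
    · exact aux u hu3 v hv hv3 h
    · exact (aux v hv3 u hu hu3 h.symm).symm
    · rw [hg3nBA u hu3, hg3nBA v hv3] at h; exact I2 u hu v hv h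
  have I4 : ∀ u ∈ A ∪ B, ∀ v ∈ A ∪ B, g4 u = g4 v → u = v := by
    intro u hu v hv h
    rw [hg4σ u hu, hg4σ v hv] at h
    exact σ.injective h
  -- the four automorphisms
  obtain ⟨τ1, hτ1⟩ := extend_pairs G hG (A ∪ B) (fun v => v) g1
    (fun u _ v _ h => h) I1 (fun u hu v hv => P1 u hu v hv)
  obtain ⟨τ2, hτ2⟩ := extend_pairs G hG (A ∪ B) g1 g2 I1 I2
    (fun u hu v hv => (P2 u hu v hv).trans (P1 u hu v hv).symm)
  obtain ⟨τ3, hτ3⟩ := extend_pairs G hG (A ∪ B) g2 g3 I2 I3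
    (fun u hu v hv => (P3 u hu v hv).trans (P2 u hu v hv).symm)
  obtain ⟨τ4, hτ4⟩ := extend_pairs G hG (A ∪ B) g3 g4 I3 I4
    (fun u hu v hv => (P4 u hu v hv).trans (P3 u hu v hv).symm)
  have hτ1' : ∀ v ∈ A ∪ B, τ1 v = g1 v := fun v hv => hτ1 v hv
  -- action bookkeeping
  have act_inv : ∀ (φ : G ≃g G), act φ x = x → act φ.symm x = x := by
    intro φ h
    have h1 : φ.trans φ.symm = RelIso.refl G.Adj := RelIso.ext fun v => φ.symm_apply_apply v
    calc act φ.symm x = act φ.symm (act φ x) := by rw [h]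
      _ = act (φ.trans φ.symm) x := (h_comp φ φ.symm x).symm
      _ = x := by rw [h1, h_id]
  have supp_conj : ∀ (φ γ : G ≃g G) (S : Finset V), SupportsElt G act S x → act φ x = x →
      (∀ s ∈ S, γ (φ s) = φ s) → act γ x = x := by
    intro φ γ S hS hφ hfix
    have hβ : act ((φ.trans γ).trans φ.symm) x = x := by
      apply hS
      intro s hs
      show φ.symm (γ (φ s)) = s
      rw [hfix s hs, φ.symm_apply_apply]
    have hγ : γ = (φ.symm.trans ((φ.trans γ).trans φ.symm)).trans φ := by
      apply RelIso.ext
      intro v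
      simp [RelIso.trans_apply]
    rw [hγ, h_comp, h_comp, act_inv φ hφ, hβ, hφ]
  -- step by step
  have hx1 : act τ1 x = x := by
    apply hA
    intro a ha
    rw [hτ1' a (hAB a ha), hg1A a ha]
  have hx2 : act τ2 x = x := by
    apply supp_conj τ1 τ2 B hB hx1
    intro b hb
    rw [hτ1' b (hBA b hb), hτ2 b (hBA b hb)]
    exact hg2nAB b (fun h => (Finset.mem_sdiff.1 h).2 hb)
  set φ2 := τ1.trans τ2 with hφ2def
  have hφ2x : act φ2 x = x := by rw [hφ2def, h_comp, hx1, hx2]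
  have hφ2app : ∀ v ∈ A ∪ B, φ2 v = g2 v := by
    intro v hv
    show τ2 (τ1 v) = g2 v
    rw [hτ1' v hv, hτ2 v hv]
  have hx3 : act τ3 x = x := by
    apply supp_conj φ2 τ3 A hA hφ2x
    intro a ha
    rw [hφ2app a (hAB a ha), hτ3 a (hAB a ha)]
    exact hg3nBA a (fun h => (Finset.mem_sdiff.1 h).2 ha)
  set φ3 := φ2.trans τ3 with hφ3def
  have hφ3x : act φ3 x = x := by rw [hφ3def, h_comp, hφ2x, hx3]
  have hφ3app : ∀ v ∈ A ∪ B, φ3 v = g3 v := by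
    intro v hv
    show τ3 (φ2 v) = g3 v
    rw [hφ2app v hv, hτ3 v hv]
  have hx4 : act τ4 x = x := by
    apply supp_conj φ3 τ4 B hB hφ3x
    intro b hb
    rw [hφ3app b (hBA b hb), hτ4 b (hBA b hb)]
    exact hg4nAB b (fun h => (Finset.mem_sdiff.1 h).2 hb)
  set φ4 := φ3.trans τ4 with hφ4def
  have hφ4x : act φ4 x = x := by rw [hφ4def, h_comp, hφ3x, hx4]
  have hφ4app : ∀ v ∈ A ∪ B, φ4 v = σ v := by
    intro v hv
    show τ4 (φ3 v) = σ v
    rw [hφ3app v hv, hτ4 v hv, hg4σ v hv]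
  -- conclude
  set ψ := σ.trans φ4.symm with hψdef
  have hψA : ∀ a ∈ A, ψ a = a := by
    intro a ha
    show φ4.symm (σ a) = a
    rw [← hφ4app a (hAB a ha), φ4.symm_apply_apply]
  have hψx : act ψ x = x := hA ψ hψA
  have hσeq : σ = ψ.trans φ4 := by
    apply RelIso.ext
    intro v
    show σ v = φ4 (φ4.symm (σ v))
    rw [φ4.apply_symm_apply]
  rw [hσeq, h_comp, hψx, hφ4x]
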